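/- arXiv:2404.07552 — 2 statements merged into one kernel-verified Lean document; each statement's English description precedes it below -/
import Mathlib

section
/- Let E and V be real normed vector spaces, let x* ∈ E, and let c > 0, K_L > 0, and ρ₀ > 0 with ρ₀ ≤ 1/(4·K_L·c). Let F : E → V be Fréchet differentiable at every point of the closed ball B̄(x*, ρ₀) within that ball, with derivative map DF, and suppose: (i) DF is Lipschitz on B̄(x*, ρ₀) with constant K_L, i.e., ‖DF(y) − DF(z)‖ ≤ K_L‖y − z‖ for y, z in the ball; (ii) for every θ ∈ B̄(x*, ρ₀) and every v ∈ E, ‖v‖ ≤ 2c·‖DF(θ) v‖. Then F is stable on B̄(x*, ρ₀) with constant 4c, i.e., ‖y − z‖ ≤ 4c·‖F(y) − F(z)‖ for all y, z ∈ B̄(x*, ρ₀). -/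
/-- Taylor-type remainder bound on a segment inside the ball. -/
lemma taylor_seg
    {E V : Type*} [NormedAddCommGroup E] [NormedSpace ℝ E]
    [NormedAddCommGroup V] [NormedSpace ℝ V]
    (xstar : E) (K_L ρ₀ : ℝ) (hKL : 0 ≤ K_L)
    (F : E → V) (DF : E → E →L[ℝ] V)
    (hdiff : ∀ θ ∈ Metric.closedBall xstar ρ₀,
      HasFDerivWithinAt F (DF θ) (Metric.closedBall xstar ρ₀) θ)
    (hLip : ∀ y ∈ Metric.closedBall xstar ρ₀, ∀ z ∈ Metric.closedBall xstar ρ₀,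
      ‖DF y - DF z‖ ≤ K_L * ‖y - z‖)
    (a b : E) (ha : a ∈ Metric.closedBall xstar ρ₀) (hb : b ∈ Metric.closedBall xstar ρ₀) :
    ‖F b - F a - DF a (b - a)‖ ≤ (K_L * ‖b - a‖) * ‖b - a‖ := by
  have hconv : Convex ℝ (Metric.closedBall xstar ρ₀) := convex_closedBall _ _
  have hsub : segment ℝ a b ⊆ Metric.closedBall xstar ρ₀ := hconv.segment_subset ha hb
  have hof : ∀ x ∈ segment ℝ a b, HasFDerivWithinAt F (DF x) (segment ℝ a b) x :=
    fun x hx => (hdiff x (hsub hx)).mono hsub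
  have bound : ∀ x ∈ segment ℝ a b, ‖DF x - DF a‖ ≤ K_L * ‖b - a‖ := by
    intro x hx
    rw [segment_eq_image'] at hx
    obtain ⟨t, ht, rfl⟩ := hx
    calc ‖DF (a + t • (b - a)) - DF a‖
        ≤ K_L * ‖a + t • (b - a) - a‖ := hLip _ (hsub (by
            rw [segment_eq_image']; exact ⟨t, ht, rfl⟩)) a ha
      _ ≤ K_L * ‖b - a‖ := by
          have : ‖a + t • (b - a) - a‖ = t * ‖b - a‖ := by
            rw [add_sub_cancel_left, norm_smul, Real.norm_of_nonneg ht.1]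
          rw [this]
          nlinarith [mul_nonneg hKL (norm_nonneg (b-a)), norm_nonneg (b - a), ht.1, ht.2,
            mul_le_mul_of_nonneg_left (mul_le_of_le_one_left (norm_nonneg (b-a)) ht.2) hKL]
  have := (convex_segment a b).norm_image_sub_le_of_norm_hasFDerivWithin_le' hof bound
    (left_mem_segment ℝ a b) (right_mem_segment ℝ a b)
  simpa using this

/-- Stability criterion (Proposition 5 of Han et al.): if `F` has a Fréchet derivative `DF`
on the closed ball `B̄(x*, ρ₀)` (within the ball) which is `K_L`-Lipschitz there, if every
derivative satisfies the lower bound `‖v‖ ≤ 2c ‖DF θ v‖`, and if `ρ₀ ≤ 1/(4 K_L c)`, then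
`F` is stable on the ball with constant `4c`. -/
theorem stability_criterion
    {E V : Type*} [NormedAddCommGroup E] [NormedSpace ℝ E]
    [NormedAddCommGroup V] [NormedSpace ℝ V]
    (xstar : E) (c K_L ρ₀ : ℝ) (hc : 0 < c) (hKL : 0 < K_L) (hρ₀ : 0 < ρ₀)
    (hρ₀le : ρ₀ ≤ 1 / (4 * K_L * c))
    (F : E → V) (DF : E → E →L[ℝ] V)
    (hdiff : ∀ θ ∈ Metric.closedBall xstar ρ₀,
      HasFDerivWithinAt F (DF θ) (Metric.closedBall xstar ρ₀) θ)
    (hLip : ∀ y ∈ Metric.closedBall xstar ρ₀, ∀ z ∈ Metric.closedBall xstar ρ₀,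
      ‖DF y - DF z‖ ≤ K_L * ‖y - z‖)
    (hlb : ∀ θ ∈ Metric.closedBall xstar ρ₀, ∀ v : E, ‖v‖ ≤ 2 * c * ‖DF θ v‖) :
    ∀ y ∈ Metric.closedBall xstar ρ₀, ∀ z ∈ Metric.closedBall xstar ρ₀,
      ‖y - z‖ ≤ 4 * c * ‖F y - F z‖ := by
  intro y hy z hz
  set m : E := (1/2 : ℝ) • (y + z) with hm
  have hmmem : m ∈ Metric.closedBall xstar ρ₀ := by
    have := convex_closedBall xstar ρ₀ hy hz (by norm_num : (0:ℝ) ≤ 1/2)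
      (by norm_num : (0:ℝ) ≤ 1/2) (by norm_num)
    simpa [smul_add, hm] using this
  have hym : y - m = (1/2 : ℝ) • (y - z) := by
    rw [hm]; module
  have hmz : m - z = (1/2 : ℝ) • (y - z) := by
    rw [hm]; module
  have hnym : ‖y - m‖ = (1/2) * ‖y - z‖ := by
    rw [hym, norm_smul]; norm_num
  have hnmz : ‖m - z‖ = (1/2) * ‖y - z‖ := by
    rw [hmz, norm_smul]; norm_num
  -- Taylor bounds
  have h1 := taylor_seg xstar K_L ρ₀ hKL.le F DF hdiff hLip m y hmmem hy
  have h2 := taylor_seg xstar K_L ρ₀ hKL.le F DF hdiff hLip m z hmmem hz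
  have hkey : ‖F y - F z - DF m (y - z)‖ ≤ (K_L / 2) * ‖y - z‖ ^ 2 := by
    have hsplit : F y - F z - DF m (y - z) =
        (F y - F m - DF m (y - m)) - (F z - F m - DF m (z - m)) := by
      have : DF m (y - z) = DF m (y - m) - DF m (z - m) := by
        rw [← ContinuousLinearMap.map_sub]; congr 1; abel
      rw [this]; abel
    have hnzm : ‖z - m‖ = (1/2) * ‖y - z‖ := by
      rw [← norm_neg, neg_sub]; exact hnmz
    calc ‖F y - F z - DF m (y - z)‖
        ≤ ‖F y - F m - DF m (y - m)‖ + ‖F z - F m - DF m (z - m)‖ := by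
          rw [hsplit]; exact norm_sub_le _ _
      _ ≤ (K_L * ‖y - m‖) * ‖y - m‖ + (K_L * ‖z - m‖) * ‖z - m‖ := by
          exact add_le_add h1 h2
      _ = (K_L / 2) * ‖y - z‖ ^ 2 := by rw [hnym, hnzm]; ring
  -- distance bound
  have hdyz : ‖y - z‖ ≤ 2 * ρ₀ := by
    have := dist_triangle_right y z xstar
    rw [Metric.mem_closedBall] at hy hz
    rw [← dist_eq_norm]; linarith
  have hrem : (K_L / 2) * ‖y - z‖ ^ 2 ≤ (1 / (4 * c)) * ‖y - z‖ := by
    have hρ : K_L * ρ₀ ≤ 1 / (4 * c) := by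
      rw [le_div_iff₀ (by positivity)] at hρ₀le ⊢
      nlinarith
    have hn : 0 ≤ ‖y - z‖ := norm_nonneg _
    have hsq : ‖y - z‖ ^ 2 ≤ 2 * ρ₀ * ‖y - z‖ := by nlinarith
    nlinarith [mul_le_mul_of_nonneg_right hρ hn,
      mul_le_mul_of_nonneg_left hsq (le_of_lt (half_pos hKL))]
  have hstep : ‖y - z‖ ≤ 2 * c * ‖DF m (y - z)‖ := hlb m hmmem (y - z)
  have hDFm : ‖DF m (y - z)‖ ≤ ‖F y - F z‖ + (1 / (4 * c)) * ‖y - z‖ := by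
    have : ‖DF m (y - z)‖ ≤ ‖F y - F z‖ + ‖F y - F z - DF m (y - z)‖ := by
      have := norm_sub_le (F y - F z) (F y - F z - DF m (y - z))
      simpa using this
    linarith [hkey.trans hrem]
  have hfinal : ‖y - z‖ ≤ 2 * c * ‖F y - F z‖ + (1/2) * ‖y - z‖ := by
    have h2c : (0:ℝ) < 2 * c := by positivity
    calc ‖y - z‖ ≤ 2 * c * ‖DF m (y - z)‖ := hstep
      _ ≤ 2 * c * (‖F y - F z‖ + (1 / (4 * c)) * ‖y - z‖) := by
          exact mul_le_mul_of_nonneg_left hDFm (by positivity)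
      _ = 2 * c * ‖F y - F z‖ + (1/2) * ‖y - z‖ := by
          field_simp; ring
  linarith
end

section
/- Let E and V be real Banach spaces, let θ* ∈ E, and let ρ > 0. Let Q_N : E → V be Fréchet differentiable at every point of the closed ball B̄(θ*, ρ) within that ball, with derivative map DQ_N that is Lipschitz on B̄(θ*, ρ) with constant K_L > 0. Let T : E ≃L V be a continuous linear equivalence and set c := ‖T⁻¹‖, assumed positive. Let ρ₀ satisfy 0 < ρ₀ ≤ min(ρ, 1/(4·K_L·c)), and suppose that ‖T − DQ_N(θ)‖ ≤ 1/(2c) for every θ ∈ B̄(θ*, ρ₀). Then: (i) for every θ ∈ B̄(θ*, ρ₀), the continuous linear map DQ_N(θ) is bijective with continuous inverse satisfying ‖DQ_N(θ)⁻¹‖ ≤ 2c; and (ii) Q_N is stable on B̄(θ*, ρ₀) with constant 4c, i.e., ‖y − z‖ ≤ 4c·‖Q_N(y) − Q_N(z)‖ for all y, z ∈ B̄(θ*, ρ₀). -/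
/-- Deterministic content of the paper's Theorem 5.5 (correspondence relation of the most
probable transition pathways in the mean-field sense): if `DQ_N` is `K_L`-Lipschitz on
`B̄(θ*, ρ)`, `T = DQ(θ*)` is a continuous linear equivalence with `c = ‖T⁻¹‖ > 0`,
`0 < ρ₀ ≤ min(ρ, 1/(4 K_L c))`, and `‖T - DQ_N θ‖ ≤ 1/(2c)` on `B̄(θ*, ρ₀)`, then each
`DQ_N θ` is invertible with `‖DQ_N(θ)⁻¹‖ ≤ 2c`, and `Q_N` is stable on `B̄(θ*, ρ₀)` with
constant `4c`. -/
theorem correspondence_most_probable_transition_pathways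
    {E V : Type*} [NormedAddCommGroup E] [NormedSpace ℝ E] [CompleteSpace E]
    [NormedAddCommGroup V] [NormedSpace ℝ V] [CompleteSpace V]
    (θstar : E) (ρ K_L : ℝ) (hρ : 0 < ρ) (hKL : 0 < K_L)
    (QN : E → V) (DQN : E → E →L[ℝ] V)
    (hdiff : ∀ θ ∈ Metric.closedBall θstar ρ,
      HasFDerivWithinAt QN (DQN θ) (Metric.closedBall θstar ρ) θ)
    (hLip : ∀ y ∈ Metric.closedBall θstar ρ, ∀ z ∈ Metric.closedBall θstar ρ,
      ‖DQN y - DQN z‖ ≤ K_L * ‖y - z‖)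
    (T : E ≃L[ℝ] V) (c : ℝ) (hc : c = ‖(T.symm : V →L[ℝ] E)‖) (hcpos : 0 < c)
    (ρ₀ : ℝ) (hρ₀ : 0 < ρ₀) (hρ₀le : ρ₀ ≤ min ρ (1 / (4 * K_L * c)))
    (hclose : ∀ θ ∈ Metric.closedBall θstar ρ₀,
      ‖(T : E →L[ℝ] V) - DQN θ‖ ≤ 1 / (2 * c)) :
    (∀ θ ∈ Metric.closedBall θstar ρ₀,
      Function.Bijective (DQN θ) ∧
        ∃ Dinv : V →L[ℝ] E, (∀ v : E, Dinv (DQN θ v) = v) ∧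
          (∀ w : V, DQN θ (Dinv w) = w) ∧ ‖Dinv‖ ≤ 2 * c) ∧
    (∀ y ∈ Metric.closedBall θstar ρ₀, ∀ z ∈ Metric.closedBall θstar ρ₀,
      ‖y - z‖ ≤ 4 * c * ‖QN y - QN z‖) := by
  have hball : Metric.closedBall θstar ρ₀ ⊆ Metric.closedBall θstar ρ :=
    Metric.closedBall_subset_closedBall (le_trans hρ₀le (min_le_left _ _))
  constructor
  · intro θ hθ
    -- Construct the inverse via a Neumann series.
    set A : E →L[ℝ] V := DQN θ with hA
    set B : E →L[ℝ] E := (T.symm : V →L[ℝ] E).comp ((T : E →L[ℝ] V) - A) with hB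
    have hBnorm : ‖B‖ ≤ 1 / 2 := by
      calc ‖B‖ ≤ ‖(T.symm : V →L[ℝ] E)‖ * ‖(T : E →L[ℝ] V) - A‖ :=
            ContinuousLinearMap.opNorm_comp_le _ _
        _ ≤ c * (1 / (2 * c)) := by
            apply mul_le_mul (le_of_eq hc.symm) (hclose θ hθ) (norm_nonneg _) hcpos.le
        _ = 1 / 2 := by field_simp
    have hBlt : ‖B‖ < 1 := lt_of_le_of_lt hBnorm (by norm_num)
    set u : (E →L[ℝ] E)ˣ := Units.oneSub B hBlt with hu
    have huval : (u : E →L[ℝ] E) = 1 - B := rfl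
    have hTA : ∀ v : E, T ((u : E →L[ℝ] E) v) = A v := by
      intro v
      rw [huval]
      simp [B, ContinuousLinearMap.sub_apply, ContinuousLinearMap.comp_apply, map_sub]
    set Dinv : V →L[ℝ] E := ((u⁻¹ : (E →L[ℝ] E)ˣ) : E →L[ℝ] E).comp (T.symm : V →L[ℝ] E)
      with hD
    have hleft : ∀ v : E, Dinv (A v) = v := by
      intro v
      have h1 : (T.symm : V →L[ℝ] E) (A v) = (u : E →L[ℝ] E) v := by
        rw [← hTA v]; exact T.symm_apply_apply _
      have h2 : ((u⁻¹ : (E →L[ℝ] E)ˣ) : E →L[ℝ] E).comp (u : E →L[ℝ] E) = 1 := by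
        exact u.inv_mul
      calc Dinv (A v) = ((u⁻¹ : (E →L[ℝ] E)ˣ) : E →L[ℝ] E) ((u : E →L[ℝ] E) v) := by
            rw [hD, ContinuousLinearMap.comp_apply, h1]
        _ = (((u⁻¹ : (E →L[ℝ] E)ˣ) : E →L[ℝ] E).comp (u : E →L[ℝ] E)) v := rfl
        _ = v := by rw [h2]; rfl
    have hright : ∀ w : V, A (Dinv w) = w := by
      intro w
      have h2 : (u : E →L[ℝ] E).comp ((u⁻¹ : (E →L[ℝ] E)ˣ) : E →L[ℝ] E) = 1 := by
        exact u.mul_inv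
      have : (u : E →L[ℝ] E) (((u⁻¹ : (E →L[ℝ] E)ˣ) : E →L[ℝ] E)
          ((T.symm : V →L[ℝ] E) w)) = (T.symm : V →L[ℝ] E) w := by
        have := congrArg (fun f : E →L[ℝ] E => f ((T.symm : V →L[ℝ] E) w)) h2
        simpa using this
      calc A (Dinv w) = T ((u : E →L[ℝ] E) (((u⁻¹ : (E →L[ℝ] E)ˣ) : E →L[ℝ] E)
            ((T.symm : V →L[ℝ] E) w))) := by rw [hTA]; rfl
        _ = T ((T.symm : V →L[ℝ] E) w) := by rw [this]
        _ = w := T.apply_symm_apply w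
    refine ⟨⟨?_, ?_⟩, Dinv, hleft, hright, ?_⟩
    · intro v₁ v₂ h
      have := congrArg Dinv h
      rwa [hleft, hleft] at this
    · intro w
      exact ⟨Dinv w, hright w⟩
    · -- norm bound
      have hinv : ‖((u⁻¹ : (E →L[ℝ] E)ˣ) : E →L[ℝ] E)‖ ≤ 2 := by
        have huinv : ((u⁻¹ : (E →L[ℝ] E)ˣ) : E →L[ℝ] E) = ∑' n : ℕ, B ^ n := rfl
        rw [huinv]
        have hgeom := tsum_geometric_le_of_norm_lt_one B hBlt
        have hone : ‖(1 : E →L[ℝ] E)‖ ≤ 1 := ContinuousLinearMap.norm_id_le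
        have hB2 : (1 - ‖B‖)⁻¹ ≤ 2 := by
          rw [inv_le_comm₀ (by linarith) (by norm_num)]
          linarith
        linarith
      calc ‖Dinv‖ ≤ ‖((u⁻¹ : (E →L[ℝ] E)ˣ) : E →L[ℝ] E)‖ * ‖(T.symm : V →L[ℝ] E)‖ :=
            ContinuousLinearMap.opNorm_comp_le _ _
        _ ≤ 2 * c := by
            rw [← hc]
            exact mul_le_mul hinv le_rfl hcpos.le (by norm_num)
  · intro y hy z hz
    have hconv : Convex ℝ (Metric.closedBall θstar ρ₀) := convex_closedBall _ _
    have hmean : ‖QN y - QN z - (T : E →L[ℝ] V) (y - z)‖ ≤ (1 / (2 * c)) * ‖y - z‖ := by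
      apply hconv.norm_image_sub_le_of_norm_hasFDerivWithin_le'
        (f' := DQN) (fun x hx => (hdiff x (hball hx)).mono hball) ?_ hz hy
      intro x hx
      rw [norm_sub_rev]
      exact hclose x hx
    have hanti : ‖y - z‖ ≤ c * ‖(T : E →L[ℝ] V) (y - z)‖ := by
      calc ‖y - z‖ = ‖(T.symm : V →L[ℝ] E) ((T : E →L[ℝ] V) (y - z))‖ := by
            rw [show (T.symm : V →L[ℝ] E) ((T : E →L[ℝ] V) (y - z)) = y - z from
              T.symm_apply_apply _]
        _ ≤ ‖(T.symm : V →L[ℝ] E)‖ * ‖(T : E →L[ℝ] V) (y - z)‖ :=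
            ContinuousLinearMap.le_opNorm _ _
        _ = c * ‖(T : E →L[ℝ] V) (y - z)‖ := by rw [hc]
    have htri : ‖(T : E →L[ℝ] V) (y - z)‖ ≤ ‖QN y - QN z‖ +
        ‖QN y - QN z - (T : E →L[ℝ] V) (y - z)‖ := by
      have := norm_sub_le (QN y - QN z) (QN y - QN z - (T : E →L[ℝ] V) (y - z))
      simpa using this
    have hkey : ‖y - z‖ ≤ c * ‖QN y - QN z‖ + (1 / 2) * ‖y - z‖ := by
      have h1 : c * (1 / (2 * c)) = 1 / 2 := by field_simp
      calc ‖y - z‖ ≤ c * ‖(T : E →L[ℝ] V) (y - z)‖ := hanti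
        _ ≤ c * (‖QN y - QN z‖ + ‖QN y - QN z - (T : E →L[ℝ] V) (y - z)‖) := by
            exact mul_le_mul_of_nonneg_left htri hcpos.le
        _ ≤ c * (‖QN y - QN z‖ + (1 / (2 * c)) * ‖y - z‖) := by
            apply mul_le_mul_of_nonneg_left _ hcpos.le
            linarith
        _ = c * ‖QN y - QN z‖ + (c * (1 / (2 * c))) * ‖y - z‖ := by ring
        _ = c * ‖QN y - QN z‖ + (1 / 2) * ‖y - z‖ := by rw [h1]
    have hQ : 0 ≤ ‖QN y - QN z‖ := norm_nonneg _
    nlinarith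
end
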